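/- A coalgebra endomorphism G of the reduced tensor coalgebra T V whose first component g_1: V → V is an isomorphism is itself an isomorphism. -/

import Mathlib

open scoped TensorProduct DirectSum

noncomputable section

/-- `n`-th tensor power of `V` over `ℂ`. -/
abbrev Tpow (V : Type) [AddCommGroup V] [Module ℂ V] (n : ℕ) : Type :=
  ⨂[ℂ] _ : Fin n, V

/-- The underlying space `⊕_{n ≥ 1} V^{⊗n}` of the reduced tensor coalgebra
(the summand of index `n` is `V^{⊗(n+1)}`). -/
abbrev TCo (V : Type) [AddCommGroup V] [Module ℂ V] : Type :=
  ⨁ n : ℕ, Tpow V (n + 1)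

variable {V W : Type} [AddCommGroup V] [Module ℂ V] [AddCommGroup W] [Module ℂ W]

/-- Cast between tensor powers of equal exponents. -/
def castT {m n : ℕ} (h : m = n) : Tpow V m ≃ₗ[ℂ] Tpow V n :=
  PiTensorProduct.reindex ℂ (fun _ => V) (finCongr h)

/-- Splitting `V^{⊗(i+1)+(j+1)} ≅ V^{⊗(i+1)} ⊗ V^{⊗(j+1)}`. -/
def splitT (i j : ℕ) :
    Tpow V ((i + 1) + (j + 1)) ≃ₗ[ℂ] Tpow V (i + 1) ⊗[ℂ] Tpow V (j + 1) :=
  (PiTensorProduct.reindex ℂ (fun _ => V) finSumFinEquiv.symm).trans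
    (PiTensorProduct.tmulEquiv ℂ V).symm

/-- Inclusion of the `n`-indexed summand `V^{⊗(n+1)} → T V`. -/
def inclT (V : Type) [AddCommGroup V] [Module ℂ V] (n : ℕ) :
    Tpow V (n + 1) →ₗ[ℂ] TCo V :=
  DirectSum.lof ℂ ℕ (fun m => Tpow V (m + 1)) n

/-- The deconcatenation coproduct on the reduced tensor coalgebra. -/
def Δ (V : Type) [AddCommGroup V] [Module ℂ V] : TCo V →ₗ[ℂ] TCo V ⊗[ℂ] TCo V :=
  DirectSum.toModule ℂ ℕ (TCo V ⊗[ℂ] TCo V) fun n =>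
    ∑ i : Fin n,
      (TensorProduct.map (inclT V i) (inclT V (n - 1 - i))).comp
        ((splitT (i : ℕ) (n - 1 - i)).toLinearMap.comp
          (castT (show n + 1 = ((i : ℕ) + 1) + ((n - 1 - (i : ℕ)) + 1) by
            have := i.isLt; omega)).toLinearMap)

/-- The projection `π₁ : T V → V` onto the first tensor component. -/
def pr (V : Type) [AddCommGroup V] [Module ℂ V] : TCo V →ₗ[ℂ] V :=
  DirectSum.toModule ℂ ℕ V fun n =>
    match n with
    | 0 => (PiTensorProduct.subsingletonEquiv (0 : Fin 1)).toLinearMap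
    | _ + 1 => 0

/-- The inclusion `V → T V` as the first tensor component. -/
def inclV (V : Type) [AddCommGroup V] [Module ℂ V] : V →ₗ[ℂ] TCo V :=
  (inclT V 0).comp (PiTensorProduct.subsingletonEquiv (R := ℂ) (s := fun _ : Fin 1 => V) (0 : Fin 1)).symm.toLinearMap

/-- A linear map `T V → T W` is a coalgebra morphism when it commutes with
the deconcatenation coproducts. -/
def IsCoalgMap (F : TCo V →ₗ[ℂ] TCo W) : Prop :=
  (Δ W).comp F = (TensorProduct.map F F).comp (Δ V)

/-- A linear map `T V → T V` is a coderivation when it satisfies the co-Leibniz rule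
`Δ ∘ B = (B ⊗ id + id ⊗ B) ∘ Δ`. -/
def IsCoder (B : TCo V →ₗ[ℂ] TCo V) : Prop :=
  (Δ V).comp B =
    (TensorProduct.map B LinearMap.id + TensorProduct.map LinearMap.id B).comp (Δ V)

/-- `F : T V → T W` is the coalgebra lift of the linear map `f : V → W`:
it is a coalgebra morphism whose projection to `W` is `f` on `V` and `0` on `V^{⊗n}`, `n ≥ 2`. -/
def IsCoalgLift (f : V →ₗ[ℂ] W) (F : TCo V →ₗ[ℂ] TCo W) : Prop :=
  IsCoalgMap F ∧ (pr W).comp (F.comp (inclV V)) = f ∧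
    ∀ n : ℕ, n ≠ 0 → (pr W).comp (F.comp (inclT V n)) = 0

/-- `A : T V → T V` is the coderivation lift of the bilinear map `a : V ⊗ V → V`:
it is a coderivation whose projection to `V` is `a` on `V^{⊗2}` and `0` on the
other tensor powers. -/
def IsCoderLift (a : V →ₗ[ℂ] V →ₗ[ℂ] V) (A : TCo V →ₗ[ℂ] TCo V) : Prop :=
  IsCoder A ∧
    (∀ X : Fin 2 → V,
      pr V (A (inclT V 1 (PiTensorProduct.tprod ℂ X))) = a (X 0) (X 1)) ∧
    ∀ n : ℕ, n ≠ 1 → (pr V).comp (A.comp (inclT V n)) = 0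

/-- The exponential `exp(A) = Σ_k A^k / k!` of a tensor-degree-lowering map `A` on `T V`
(on the summand `V^{⊗(n+1)}` the series truncates at `k = n`). -/
def expT (A : TCo V →ₗ[ℂ] TCo V) : TCo V →ₗ[ℂ] TCo V :=
  DirectSum.toModule ℂ ℕ (TCo V) fun n =>
    (∑ k ∈ Finset.range (n + 1), ((k.factorial : ℂ)⁻¹) • (A ^ k)).comp (inclT V n)

/-- Left-associated product of a nonempty list (junk value `0` on the empty list). -/
def listProd (mul : V →ₗ[ℂ] V →ₗ[ℂ] V) : List V → V
  | [] => 0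
  | x :: xs => xs.foldl (fun u v => mul u v) x

/-- The `n`-fold product `X 0 · X 1 ⋯ X (n-1)`. -/
def prodF (mul : V →ₗ[ℂ] V →ₗ[ℂ] V) {n : ℕ} (X : Fin n → V) : V :=
  listProd mul (List.ofFn X)


abbrev projT (V : Type) [AddCommGroup V] [Module ℂ V] (n : ℕ) : TCo V →ₗ[ℂ] Tpow V (n+1) :=
  DirectSum.component ℂ ℕ (fun m => Tpow V (m+1)) n

abbrev Gcmp (G : TCo V →ₗ[ℂ] TCo V) (m n : ℕ) : Tpow V (n+1) →ₗ[ℂ] Tpow V (m+1) :=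
  (projT V m) ∘ₗ G ∘ₗ inclT V n

lemma projT_inclT_self (n : ℕ) (x : Tpow V (n+1)) : projT V n (inclT V n x) = x :=
  DirectSum.component.lof_self (R := ℂ) _ _

lemma projT_inclT_ne {m n : ℕ} (h : n ≠ m) (x : Tpow V (n+1)) :
    projT V m (inclT V n x) = 0 := by
  rw [inclT, DirectSum.component.of]; exact dif_neg h

lemma projT_comp_inclT_self (n : ℕ) : projT V n ∘ₗ inclT V n = LinearMap.id :=
  LinearMap.ext fun x => projT_inclT_self n x

lemma projT_comp_inclT_ne {m n : ℕ} (h : n ≠ m) : projT V m ∘ₗ inclT V n = 0 :=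
  LinearMap.ext fun x => projT_inclT_ne h x

lemma Δ_inclT (n : ℕ) (x : Tpow V (n+1)) :
    Δ V (inclT V n x) = ∑ a : Fin n,
      (TensorProduct.map (inclT V a) (inclT V (n - 1 - a)))
        ((splitT (a : ℕ) (n - 1 - a))
          ((castT (show n + 1 = ((a : ℕ) + 1) + ((n - 1 - (a : ℕ)) + 1) by
            have := a.isLt; omega)) x)) := by
  rw [Δ, inclT, DirectSum.toModule_lof]
  simp [LinearMap.sum_apply]

-- helper: matching indices
lemma match_term {i j a b : ℕ} (ha : a = i) (hb : b = j)
    (t : Tpow V (a+1) ⊗[ℂ] Tpow V (b+1)) :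
    TensorProduct.map (projT V i) (projT V j)
      (TensorProduct.map (inclT V a) (inclT V b) t) =
    TensorProduct.map
      ((castT (by omega : a+1 = i+1)).toLinearMap)
      ((castT (by omega : b+1 = j+1)).toLinearMap) t := by
  subst ha; subst hb
  rw [← LinearMap.comp_apply, ← TensorProduct.map_comp,
    projT_comp_inclT_self, projT_comp_inclT_self]
  simp [castT, finCongr_refl, PiTensorProduct.reindex_refl, TensorProduct.map_id]

lemma zero_term_left {i j a b : ℕ} (ha : a ≠ i)
    (t : Tpow V (a+1) ⊗[ℂ] Tpow V (b+1)) :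
    TensorProduct.map (projT V i) (projT V j)
      (TensorProduct.map (inclT V a) (inclT V b) t) = 0 := by
  rw [← LinearMap.comp_apply, ← TensorProduct.map_comp,
    projT_comp_inclT_ne ha, TensorProduct.map_zero_left, LinearMap.zero_apply]

lemma zero_term_right {i j a b : ℕ} (hb : b ≠ j)
    (t : Tpow V (a+1) ⊗[ℂ] Tpow V (b+1)) :
    TensorProduct.map (projT V i) (projT V j)
      (TensorProduct.map (inclT V a) (inclT V b) t) = 0 := by
  rw [← LinearMap.comp_apply, ← TensorProduct.map_comp,
    projT_comp_inclT_ne hb, TensorProduct.map_zero_right, LinearMap.zero_apply]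

lemma castT_castT {a b c : ℕ} (h1 : a = b) (h2 : b = c) (x : Tpow V a) :
    castT h2 (castT h1 x) = castT (h1.trans h2) x := by
  subst h1; subst h2
  simp [castT, finCongr_refl, PiTensorProduct.reindex_refl]

lemma splitT_cast {i j k l : ℕ} (hik : i = k) (hjl : j = l) (x : Tpow V ((i+1)+(j+1))) :
    TensorProduct.map (castT (by omega : i+1 = k+1)).toLinearMap
      (castT (by omega : j+1 = l+1)).toLinearMap (splitT i j x)
      = splitT k l (castT (by omega : (i+1)+(j+1) = (k+1)+(l+1)) x) := by
  subst hik; subst hjl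
  simp [castT, finCongr_refl, PiTensorProduct.reindex_refl, TensorProduct.map_id]

lemma keyΔ (i j : ℕ) (t : TCo V) :
    TensorProduct.map (projT V i) (projT V j) (Δ V t)
      = splitT i j (castT (show (i+j+1)+1 = (i+1)+(j+1) by omega) (projT V (i+j+1) t)) := by
  have h : (TensorProduct.map (projT V i) (projT V j)) ∘ₗ Δ V
      = (splitT i j).toLinearMap ∘ₗ
        (castT (show (i+j+1)+1 = (i+1)+(j+1) by omega)).toLinearMap ∘ₗ projT V (i+j+1) := by
    refine DirectSum.linearMap_ext ℂ fun n => LinearMap.ext fun x => ?_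
    simp only [LinearMap.comp_apply]
    show TensorProduct.map _ _ (Δ V (inclT V n x)) = _
    rw [Δ_inclT, map_sum]
    by_cases hn : n = i + j + 1
    · subst hn
      rw [Finset.sum_eq_single (⟨i, by omega⟩ : Fin (i+j+1))]
      · show _ = (splitT i j) ((castT _) (projT V (i+j+1) (inclT V (i+j+1) x)))
        have hv : ((⟨i, by omega⟩ : Fin (i+j+1)) : ℕ) = i := rfl
        rw [projT_inclT_self, match_term hv (by rw [hv]; omega),
          splitT_cast hv (by rw [hv]; omega), castT_castT]
      · intro b _ hb
        exact zero_term_left (fun h => hb (Fin.ext h)) _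
      · intro h; exact absurd (Finset.mem_univ _) h
    · have h0 : projT V (i+j+1) (inclT V n x) = 0 := projT_inclT_ne hn x
      simp only [inclT] at h0
      rw [h0, map_zero, map_zero]
      refine Finset.sum_eq_zero fun a _ => ?_
      by_cases hai : (a : ℕ) = i
      · refine zero_term_right (fun hbj => hn ?_) _
        have := a.isLt; omega
      · exact zero_term_left hai _
  exact LinearMap.congr_fun h t

lemma master {G : TCo V →ₗ[ℂ] TCo V} (hG : IsCoalgMap G) (i j m n : ℕ)
    (hm : i + j + 1 = m) (x : Tpow V (n+1)) :
    splitT i j (castT (show m+1 = (i+1)+(j+1) by omega) (projT V m (G (inclT V n x))))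
    = ∑ a : Fin n, TensorProduct.map (Gcmp G i a) (Gcmp G j (n-1-a))
        ((splitT (a:ℕ) (n-1-a))
          (castT (show n+1 = ((a:ℕ)+1)+((n-1-(a:ℕ))+1) by have := a.isLt; omega) x)) := by
  subst hm
  have key3 : ∀ (a b : ℕ) (s : Tpow V (a+1) ⊗[ℂ] Tpow V (b+1)),
      TensorProduct.map (projT V i) (projT V j)
        (TensorProduct.map G G (TensorProduct.map (inclT V a) (inclT V b) s))
      = TensorProduct.map (Gcmp G i a) (Gcmp G j b) s := by
    intro a b s
    rw [← LinearMap.comp_apply, ← TensorProduct.map_comp,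
      ← LinearMap.comp_apply, ← TensorProduct.map_comp]
    rfl
  have h := LinearMap.congr_fun hG (inclT V n x)
  simp only [LinearMap.comp_apply] at h
  rw [← keyΔ i j (G (inclT V n x)), h, Δ_inclT, map_sum, map_sum]
  exact Finset.sum_congr rfl fun a _ => key3 a _ _

lemma triangular {G : TCo V →ₗ[ℂ] TCo V} (hG : IsCoalgMap G) :
    ∀ n m, n < m → ∀ x : Tpow V (n+1), projT V m (G (inclT V n x)) = 0 := by
  intro n
  induction n using Nat.strong_induction_on with
  | _ n IH =>
    intro m hnm x
    obtain ⟨j, rfl⟩ : ∃ j, m = j + 1 := ⟨m-1, by omega⟩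
    have h := master hG 0 j (j+1) n (by omega) x
    rw [Finset.sum_eq_zero (fun a _ => by
      have hz : (Gcmp G j (n-1-(a:ℕ))) = 0 := LinearMap.ext fun y =>
        IH (n-1-(a:ℕ)) (by have := a.isLt; omega) j (by have := a.isLt; omega) y
      rw [hz, TensorProduct.map_zero_right, LinearMap.zero_apply])] at h
    have h2 := (LinearEquiv.map_eq_zero_iff _).mp h
    exact (LinearEquiv.map_eq_zero_iff _).mp h2

lemma diag {G : TCo V →ₗ[ℂ] TCo V} (hG : IsCoalgMap G)
    (h0 : Function.Bijective (Gcmp G 0 0)) : ∀ n, Function.Bijective (Gcmp G n n) := by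
  intro n
  induction n with
  | zero => exact h0
  | succ k IHk =>
    have heq : ∀ x : Tpow V (k+1+1),
        splitT 0 k (castT (show (k+1)+1 = (0+1)+(k+1) by omega) (Gcmp G (k+1) (k+1) x))
        = TensorProduct.map (Gcmp G 0 0) (Gcmp G k k)
            (splitT 0 k (castT (show (k+1)+1 = (0+1)+(k+1) by omega) x)) := by
      intro x
      have h := master hG 0 k (k+1) (k+1) (by omega) x
      rw [Finset.sum_eq_single (⟨0, by omega⟩ : Fin (k+1))] at h
      · exact h
      · intro b _ hb
        have hbpos : 0 < (b : ℕ) := Nat.pos_of_ne_zero (fun h' => hb (Fin.ext h'))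
        have hz : (Gcmp G k (k+1-1-(b:ℕ))) = 0 := LinearMap.ext fun y =>
          triangular hG (k+1-1-(b:ℕ)) k (by have := b.isLt; omega) y
        rw [hz, TensorProduct.map_zero_right, LinearMap.zero_apply]
      · intro h'; exact absurd (Finset.mem_univ _) h'
    set e1 := LinearEquiv.ofBijective (Gcmp G 0 0) h0
    set e2 := LinearEquiv.ofBijective (Gcmp G k k) IHk
    set E := TensorProduct.congr e1 e2
    have hmapE : ∀ y, TensorProduct.map (Gcmp G 0 0) (Gcmp G k k) y = E y := fun y => rfl
    have hfun : ⇑(Gcmp G (k+1) (k+1)) =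
        ⇑(castT (show (k+1)+1 = (0+1)+(k+1) by omega)).symm ∘ ⇑(splitT 0 k).symm ∘ ⇑E ∘
          ⇑(splitT (V := V) 0 k) ∘ ⇑(castT (show (k+1)+1 = (0+1)+(k+1) by omega)) := by
      funext x
      simp only [Function.comp_apply]
      rw [← hmapE, ← heq, LinearEquiv.symm_apply_apply, LinearEquiv.symm_apply_apply]
    rw [hfun]
    exact (LinearEquiv.bijective _).comp ((LinearEquiv.bijective _).comp
      (E.bijective.comp ((LinearEquiv.bijective _).comp (LinearEquiv.bijective _))))

lemma pr_eq (t : TCo V) :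
    pr V t = (PiTensorProduct.subsingletonEquiv (R := ℂ) (s := fun _ : Fin 1 => V) (0 : Fin 1)) (projT V 0 t) := by
  have h : pr V = (PiTensorProduct.subsingletonEquiv (R := ℂ) (s := fun _ : Fin 1 => V)
      (0 : Fin 1)).toLinearMap ∘ₗ projT V 0 := by
    refine DirectSum.linearMap_ext ℂ fun n => LinearMap.ext fun x => ?_
    simp only [LinearMap.comp_apply]
    show pr V (inclT V n x) = _
    rw [pr, inclT, DirectSum.toModule_lof]
    cases n with
    | zero => rw [DirectSum.component.lof_self (R := ℂ)]
    | succ k =>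
      rw [DirectSum.component.of, dif_neg (by omega : ¬ k + 1 = 0)]
      simp
  rw [h]; rfl

lemma D0_bij {G : TCo V →ₗ[ℂ] TCo V}
    (h1 : Function.Bijective ((pr V).comp (G.comp (inclV V)))) :
    Function.Bijective (Gcmp G 0 0) := by
  set e := PiTensorProduct.subsingletonEquiv (R := ℂ) (s := fun _ : Fin 1 => V) (0 : Fin 1)
  have hfun : ⇑(Gcmp G 0 0) = ⇑e.symm ∘ ⇑((pr V).comp (G.comp (inclV V))) ∘ ⇑e := by
    funext v
    simp only [Function.comp_apply, LinearMap.comp_apply]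
    show projT V 0 (G (inclT V 0 v)) = e.symm ((pr V) (G (inclT V 0 (e.symm (e v)))))
    rw [e.symm_apply_apply, pr_eq, e.symm_apply_apply]
  rw [hfun]
  exact e.symm.bijective.comp (h1.comp e.bijective)

lemma G_inj {G : TCo V →ₗ[ℂ] TCo V} (hG : IsCoalgMap G)
    (hd : ∀ n, Function.Bijective (Gcmp G n n)) : Function.Injective G := by
  classical
  refine (injective_iff_map_eq_zero G).mpr fun x hx => ?_
  by_contra hne
  have hsupp : x.support.Nonempty := by
    rw [Finset.nonempty_iff_ne_empty]
    exact fun h => hne (DFinsupp.support_eq_empty.mp h)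
  set n := x.support.max' hsupp with hn
  have hmem : n ∈ x.support := x.support.max'_mem hsupp
  have hx0 : projT V n (G x) = 0 := by rw [hx]; simp
  rw [← DirectSum.sum_support_of x, map_sum, map_sum] at hx0
  rw [Finset.sum_eq_single n (fun k hk hkn => by
      have hkn' : k < n := lt_of_le_of_ne (Finset.le_max' _ _ hk) hkn
      exact triangular hG k n hkn' (x k))
    (fun h => absurd hmem h)] at hx0
  have hxn : Gcmp G n n (x n) = 0 := hx0
  have : x n = 0 := by
    apply (hd n).injective
    rw [hxn, map_zero]
  exact (DFinsupp.mem_support_iff.mp hmem) this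

lemma G_surj {G : TCo V →ₗ[ℂ] TCo V} (hG : IsCoalgMap G)
    (hd : ∀ n, Function.Bijective (Gcmp G n n)) : Function.Surjective G := by
  classical
  have key : ∀ n (z : Tpow V (n+1)), inclT V n z ∈ LinearMap.range G := by
    intro n
    induction n using Nat.strong_induction_on with
    | _ n IH =>
      intro z
      set w := (LinearEquiv.ofBijective _ (hd n)).symm z with hw
      have hwz : projT V n (G (inclT V n w)) = z :=
        (LinearEquiv.ofBijective _ (hd n)).apply_symm_apply z
      set y := G (inclT V n w) - inclT V n z with hy
      have hyk : ∀ m, n ≤ m → projT V m y = 0 := by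
        intro m hm
        rcases eq_or_lt_of_le hm with rfl | hlt
        · rw [hy, map_sub, hwz, projT_inclT_self, sub_self]
        · rw [hy, map_sub, triangular hG n m hlt w, projT_inclT_ne (by omega) z, sub_zero]
      have hyrange : y ∈ LinearMap.range G := by
        rw [← DirectSum.sum_support_of y]
        refine Submodule.sum_mem _ fun m hm => ?_
        have hmn : m < n := by
          by_contra h
          push_neg at h
          exact (DFinsupp.mem_support_iff.mp hm) (hyk m h)
        exact IH m hmn (y m)
      obtain ⟨u, hu⟩ := hyrange
      exact ⟨inclT V n w - u, by rw [map_sub, hu, hy]; abel⟩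
  intro t
  have ht : t ∈ LinearMap.range G := by
    rw [← DirectSum.sum_support_of t]
    exact Submodule.sum_mem _ fun m _ => key m (t m)
  exact ht

/-- A coalgebra endomorphism of the reduced tensor coalgebra `T V` whose first
component `V → V` is an isomorphism is itself an isomorphism. -/
theorem coalgebra_endomorphism_bijective_of_first_component_bijective
    {V : Type} [AddCommGroup V] [Module ℂ V]
    (G : TCo V →ₗ[ℂ] TCo V) (hG : IsCoalgMap G)
    (h1 : Function.Bijective ((pr V).comp (G.comp (inclV V)))) :
    Function.Bijective G := by
  have hd := diag hG (D0_bij h1)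
  exact ⟨G_inj hG hd, G_surj hG hd⟩
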